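/- Let R be a discrete valuation ring with maximal ideal m whose residue field F = R/m is finite of odd cardinality, and let M ∈ Mat₂(R) be a matrix whose determinant has valuation exactly 1 (det M ∈ m, det M ∉ m²). Consider the finite set Ξ(M) = {B ∈ Mat₂(F) : B_{ij}² = M̄_{ij} for all 1 ≤ i,j ≤ 2, and det B = 0}. If all four entries of M are units of R, then 2·card(Ξ(M)) = ∏_{1≤i,j≤2}(1 + χ(M̄_{ij})); otherwise card(Ξ(M)) = ∏_{1≤i,j≤2}(1 + χ(M̄_{ij})). -/

import Mathlib

open Finset

section Aux

variable {F : Type*} [Field F] [Fintype F] [DecidableEq F]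

private def sqF (u : F) : Finset F := {x : F | x ^ 2 = u}.toFinset

private lemma card_sqF (hF : ringChar F ≠ 2) (u : F) :
    ((sqF u).card : ℤ) = 1 + quadraticChar F u := by
  rw [sqF, quadraticChar_card_sqrts hF u]; ring

private def Tset (a b c d : F) : Finset (F × F × F × F) :=
  Finset.univ.filter fun p => p.1 ^ 2 = a ∧ p.2.1 ^ 2 = b ∧ p.2.2.1 ^ 2 = c ∧ p.2.2.2 ^ 2 = d

private lemma Tset_card (hF : ringChar F ≠ 2) (a b c d : F) :
    ((Tset a b c d).card : ℤ) =
      (1 + quadraticChar F a) * ((1 + quadraticChar F b) *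
        ((1 + quadraticChar F c) * (1 + quadraticChar F d))) := by
  have h : Tset a b c d = sqF a ×ˢ sqF b ×ˢ sqF c ×ˢ sqF d := by
    ext p
    simp [Tset, sqF, Finset.mem_product, Set.mem_toFinset]
  rw [h, Finset.card_product, Finset.card_product, Finset.card_product]
  push_cast
  rw [card_sqF hF, card_sqF hF, card_sqF hF, card_sqF hF]

private def Sset (a b c d : F) : Finset (F × F × F × F) :=
  (Tset a b c d).filter fun p => p.1 * p.2.2.2 - p.2.1 * p.2.2.1 = 0

private lemma Sset_deg {a b c d : F} (hrel : a * d = b * c)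
    (h0 : a = 0 ∨ b = 0 ∨ c = 0 ∨ d = 0) :
    Sset a b c d = Tset a b c d := by
  rw [Sset, Finset.filter_eq_self]
  intro p hp
  rw [Tset, Finset.mem_filter] at hp
  obtain ⟨-, ha, hb, hc, hd⟩ := hp
  have had : a * d = 0 := by
    rcases h0 with h | h | h | h
    · rw [h, zero_mul]
    · rw [hrel, h, zero_mul]
    · rw [hrel, h, mul_zero]
    · rw [h, mul_zero]
  have h1 : p.1 * p.2.2.2 = 0 := by
    have : (p.1 * p.2.2.2) ^ 2 = 0 := by rw [mul_pow, ha, hd, had]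
    exact pow_eq_zero_iff (n := 2) (by norm_num) |>.mp this
  have h2 : p.2.1 * p.2.2.1 = 0 := by
    have : (p.2.1 * p.2.2.1) ^ 2 = 0 := by rw [mul_pow, hb, hc, ← hrel, had]
    exact pow_eq_zero_iff (n := 2) (by norm_num) |>.mp this
  rw [h1, h2, sub_zero]

private lemma Sset_nondeg (hF : ringChar F ≠ 2) {a b c d : F} (hrel : a * d = b * c)
    (ha0 : a ≠ 0) (hb0 : b ≠ 0) (hc0 : c ≠ 0) (hd0 : d ≠ 0) :
    2 * (Sset a b c d).card = (Tset a b c d).card := by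
  classical
  set S' : Finset (F × F × F × F) :=
    (Tset a b c d).filter fun p => ¬ (p.1 * p.2.2.2 - p.2.1 * p.2.2.1 = 0) with hS'
  have hsplit : (Sset a b c d).card + S'.card = (Tset a b c d).card :=
    Finset.card_filter_add_card_filter_not _
  have key : ∀ p ∈ Tset a b c d, (p.1 * p.2.2.2) ^ 2 = (p.2.1 * p.2.2.1) ^ 2 ∧
      p.1 * p.2.2.2 ≠ 0 ∧ p.2.1 * p.2.2.1 ≠ 0 := by
    intro p hp
    rw [Tset, Finset.mem_filter] at hp
    obtain ⟨-, hpa, hpb, hpc, hpd⟩ := hp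
    refine ⟨by rw [mul_pow, mul_pow, hpa, hpb, hpc, hpd, hrel], ?_, ?_⟩
    · intro h
      have : (p.1 * p.2.2.2) ^ 2 = 0 := by rw [h]; ring
      rw [mul_pow, hpa, hpd] at this
      exact ha0 (by rcases mul_eq_zero.mp this with h' | h' <;> [exact h'; exact absurd h' hd0])
    · intro h
      have : (p.2.1 * p.2.2.1) ^ 2 = 0 := by rw [h]; ring
      rw [mul_pow, hpb, hpc] at this
      exact hb0 (by rcases mul_eq_zero.mp this with h' | h' <;> [exact h'; exact absurd h' hc0])
  have hmemT : ∀ p : F × F × F × F, p ∈ Tset a b c d →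
      (-p.1, p.2) ∈ Tset a b c d := by
    intro p hp
    rw [Tset, Finset.mem_filter] at hp ⊢
    refine ⟨Finset.mem_univ _, ?_⟩
    simpa [neg_pow] using hp.2
  have two_ne : (2 : F) ≠ 0 := Ring.two_ne_zero hF
  have hcard : (Sset a b c d).card = S'.card := by
    refine Finset.card_bij' (fun p _ => (-p.1, p.2)) (fun p _ => (-p.1, p.2)) ?_ ?_ ?_ ?_
    · intro p hp
      rw [Sset, Finset.mem_filter] at hp
      obtain ⟨hpT, hdet⟩ := hp
      obtain ⟨hsq, hX, hY⟩ := key p hpT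
      rw [hS', Finset.mem_filter]
      refine ⟨hmemT p hpT, ?_⟩
      have hXY : p.1 * p.2.2.2 = p.2.1 * p.2.2.1 := by linear_combination hdet
      intro h
      dsimp only at h
      apply hY
      have : -(2 * (p.2.1 * p.2.2.1)) = 0 := by linear_combination h + hdet
      have := neg_eq_zero.mp this
      rcases mul_eq_zero.mp this with h' | h'
      · exact absurd h' two_ne
      · exact h'
    · intro p hp
      rw [hS', Finset.mem_filter] at hp
      obtain ⟨hpT, hdet⟩ := hp
      obtain ⟨hsq, hX, hY⟩ := key p hpT
      rw [Sset, Finset.mem_filter]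
      refine ⟨hmemT p hpT, ?_⟩
      have hfac : (p.1 * p.2.2.2 - p.2.1 * p.2.2.1) * (p.1 * p.2.2.2 + p.2.1 * p.2.2.1) = 0 := by
        linear_combination hsq
      have hsum : p.1 * p.2.2.2 + p.2.1 * p.2.2.1 = 0 := by
        rcases mul_eq_zero.mp hfac with h' | h'
        · exact absurd h' hdet
        · exact h'
      show -p.1 * p.2.2.2 - p.2.1 * p.2.2.1 = 0
      linear_combination -hsum
    · intro p _; simp
    · intro p _; simp
  omega

end Aux

/-- Let `R` be a discrete valuation ring with maximal ideal `m` whose residue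
field `F = R/m` is finite of odd cardinality, and let `M` be a `2×2` matrix over `R` whose
determinant has valuation exactly `1` (`det M ∈ m`, `det M ∉ m²`).  Consider the finite set
`Ξ(M) = {B ∈ Mat₂(F) : Bᵢⱼ² = M̄ᵢⱼ for all i, j, and det B = 0}`.  If all four entries of `M`
are units of `R`, then `2 · card Ξ(M) = ∏ᵢⱼ (1 + χ(M̄ᵢⱼ))`; otherwise
`card Ξ(M) = ∏ᵢⱼ (1 + χ(M̄ᵢⱼ))`, where `χ` is the quadratic character of `F` extended by zero. -/
theorem stmt_0 (R : Type*) [CommRing R] [IsDomain R] [IsDiscreteValuationRing R]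
    [Fintype (IsLocalRing.ResidueField R)] [DecidableEq (IsLocalRing.ResidueField R)]
    (hodd : Odd (Fintype.card (IsLocalRing.ResidueField R)))
    (M : Matrix (Fin 2) (Fin 2) R)
    (h1 : M.det ∈ IsLocalRing.maximalIdeal R)
    (h2 : M.det ∉ (IsLocalRing.maximalIdeal R) ^ 2) :
    ((∀ i j, IsUnit (M i j)) →
      2 * ({B : Matrix (Fin 2) (Fin 2) (IsLocalRing.ResidueField R) |
            (∀ i j, B i j ^ 2 = IsLocalRing.residue R (M i j)) ∧ B.det = 0}.ncard : ℤ) =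
        ∏ i : Fin 2, ∏ j : Fin 2,
          (1 + quadraticChar (IsLocalRing.ResidueField R) (IsLocalRing.residue R (M i j)))) ∧
    ((¬ ∀ i j, IsUnit (M i j)) →
      ({B : Matrix (Fin 2) (Fin 2) (IsLocalRing.ResidueField R) |
            (∀ i j, B i j ^ 2 = IsLocalRing.residue R (M i j)) ∧ B.det = 0}.ncard : ℤ) =
        ∏ i : Fin 2, ∏ j : Fin 2,
          (1 + quadraticChar (IsLocalRing.ResidueField R) (IsLocalRing.residue R (M i j)))) := by
  classical
  have hchar : ringChar (IsLocalRing.ResidueField R) ≠ 2 := by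
    intro h
    have := FiniteField.even_card_of_char_two h
    rw [Nat.odd_iff] at hodd
    omega
  set a := IsLocalRing.residue R (M 0 0) with hva
  set b := IsLocalRing.residue R (M 0 1) with hvb
  set c := IsLocalRing.residue R (M 1 0) with hvc
  set d := IsLocalRing.residue R (M 1 1) with hvd
  have hdet0 : IsLocalRing.residue R M.det = 0 := (IsLocalRing.residue_eq_zero_iff _).mpr h1
  have hrel : a * d = b * c := by
    rw [Matrix.det_fin_two, map_sub, map_mul, map_mul] at hdet0
    rw [hva, hvd, hvb, hvc]
    linear_combination hdet0
  set Ξ : Set (Matrix (Fin 2) (Fin 2) (IsLocalRing.ResidueField R)) :=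
    {B : Matrix (Fin 2) (Fin 2) (IsLocalRing.ResidueField R) |
      (∀ i j, B i j ^ 2 = IsLocalRing.residue R (M i j)) ∧ B.det = 0} with hΞ
  set g : Matrix (Fin 2) (Fin 2) (IsLocalRing.ResidueField R) → _ :=
    fun B => (B 0 0, B 0 1, B 1 0, B 1 1) with hg
  have ginj : Function.Injective g := by
    intro B C h
    rw [hg, Prod.mk.injEq, Prod.mk.injEq, Prod.mk.injEq] at h
    obtain ⟨e1, e2, e3, e4⟩ := h
    ext i j
    fin_cases i <;> fin_cases j <;> assumption
  have himage : g '' Ξ = ↑(Sset a b c d) := by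
    ext p
    constructor
    · rintro ⟨B, ⟨hB, hdet⟩, rfl⟩
      rw [Finset.mem_coe, Sset, Finset.mem_filter, Tset, Finset.mem_filter]
      rw [Matrix.det_fin_two] at hdet
      exact ⟨⟨Finset.mem_univ _, hB 0 0, hB 0 1, hB 1 0, hB 1 1⟩, hdet⟩
    · intro hp
      rw [Finset.mem_coe, Sset, Finset.mem_filter, Tset, Finset.mem_filter] at hp
      obtain ⟨⟨-, hpa, hpb, hpc, hpd⟩, hpdet⟩ := hp
      refine ⟨!![p.1, p.2.1; p.2.2.1, p.2.2.2], ⟨?_, ?_⟩, ?_⟩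
      · intro i j
        fin_cases i <;> fin_cases j
        · simpa [← hva] using hpa
        · simpa [← hvb] using hpb
        · simpa [← hvc] using hpc
        · simpa [← hvd] using hpd
      · rw [Matrix.det_fin_two]
        simpa using hpdet
      · rw [hg]
        simp
  have hcard : (Ξ.ncard : ℤ) = ((Sset a b c d).card : ℤ) := by
    rw [← Set.ncard_image_of_injective Ξ ginj, himage, Set.ncard_coe_finset]
  have hrhs : (∏ i : Fin 2, ∏ j : Fin 2,
        (1 + quadraticChar (IsLocalRing.ResidueField R) (IsLocalRing.residue R (M i j)))) =
      (1 + quadraticChar (IsLocalRing.ResidueField R) a) *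
        ((1 + quadraticChar (IsLocalRing.ResidueField R) b) *
        ((1 + quadraticChar (IsLocalRing.ResidueField R) c) *
          (1 + quadraticChar (IsLocalRing.ResidueField R) d))) := by
    rw [Fin.prod_univ_two]
    rw [Fin.prod_univ_two, Fin.prod_univ_two]
    rw [← hva, ← hvb, ← hvc, ← hvd]
    ring
  constructor
  · intro hunit
    have hne : ∀ x : R, IsUnit x → IsLocalRing.residue R x ≠ 0 := fun x hx =>
      (IsLocalRing.residue_ne_zero_iff_isUnit x).mpr hx
    have h2S := Sset_nondeg hchar hrel (hne _ (hunit 0 0)) (hne _ (hunit 0 1))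
      (hne _ (hunit 1 0)) (hne _ (hunit 1 1))
    rw [hrhs, hcard, ← Tset_card hchar a b c d]
    exact_mod_cast congrArg (Nat.cast : ℕ → ℤ) h2S
  · intro hnunit
    push_neg at hnunit
    obtain ⟨i, j, hij⟩ := hnunit
    have hz : IsLocalRing.residue R (M i j) = 0 := by
      by_contra h
      exact hij ((IsLocalRing.residue_ne_zero_iff_isUnit _).mp h)
    have h0 : a = 0 ∨ b = 0 ∨ c = 0 ∨ d = 0 := by
      fin_cases i <;> fin_cases j
      · exact Or.inl (hva.trans hz)
      · exact Or.inr (Or.inl (hvb.trans hz))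
      · exact Or.inr (Or.inr (Or.inl (hvc.trans hz)))
      · exact Or.inr (Or.inr (Or.inr (hvd.trans hz)))
    rw [hrhs, hcard, Sset_deg hrel h0, ← Tset_card hchar a b c d]
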